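/- Let A be a finite-dimensional quasi-hereditary algebra over an infinite perfect field. If (rad_Δ^∞)² = 0 on ℱ(Δ), then ℱ(Δ) has only finitely many isomorphism classes of indecomposable objects. -/

import Mathlib

open CategoryTheory

variable {A : Type} [Ring A]

def Indec (X : ModuleCat.{0} A) : Prop :=
  (¬ Subsingleton X) ∧ ∀ e : X ⟶ X, e ≫ e = e → e = 0 ∨ e = 𝟙 X

def Summand (D M : ModuleCat.{0} A) : Prop :=
  ∃ (i : D ⟶ M) (r : M ⟶ D), i ≫ r = 𝟙 D

inductive InAdd (C : Set (ModuleCat.{0} A)) : ModuleCat.{0} A → Prop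
  | base : ∀ {M}, M ∈ C → InAdd C M
  | prod : ∀ {M N : ModuleCat.{0} A}, InAdd C M → InAdd C N →
      InAdd C (ModuleCat.of A (M × N))
  | summand : ∀ {D M}, InAdd C M → Summand D M → InAdd C D

def relRad (C : Set (ModuleCat.{0} A)) (M N : ModuleCat.{0} A) : Set (M ⟶ N) :=
  {f | ∀ X : ModuleCat.{0} A, InAdd C X → Indec X →
    ∀ (g : X ⟶ M) (h : N ⟶ X), ¬ IsIso (g ≫ f ≫ h)}

def radPow (C : Set (ModuleCat.{0} A)) : ℕ → ∀ M N : ModuleCat.{0} A, AddSubgroup (M ⟶ N)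
  | 0, _, _ => ⊤
  | m+1, M, N => AddSubgroup.closure
      {f | ∃ (L : ModuleCat.{0} A) (g : M ⟶ L) (h : L ⟶ N),
        g ∈ radPow C m M L ∧ h ∈ relRad C L N ∧ f = g ≫ h}

def radInf (C : Set (ModuleCat.{0} A)) (M N : ModuleCat.{0} A) : AddSubgroup (M ⟶ N) :=
  ⨅ n : ℕ, radPow C (n+1) M N

def SplitProjIn (C : Set (ModuleCat.{0} A)) (N : ModuleCat.{0} A) : Prop :=
  ∀ M : ModuleCat.{0} A, InAdd C M → ∀ f : M ⟶ N, Epi f → ∃ s : N ⟶ M, s ≫ f = 𝟙 N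

def SplitInjIn (C : Set (ModuleCat.{0} A)) (N : ModuleCat.{0} A) : Prop :=
  ∀ M : ModuleCat.{0} A, InAdd C M → ∀ f : N ⟶ M, Mono f → ∃ r : M ⟶ N, f ≫ r = 𝟙 N

def P0set (C : Set (ModuleCat.{0} A)) : Set (ModuleCat.{0} A) :=
  {N | N ∈ C ∧ Indec N ∧ SplitProjIn C N}

def I0set (C : Set (ModuleCat.{0} A)) : Set (ModuleCat.{0} A) :=
  {N | N ∈ C ∧ Indec N ∧ SplitInjIn C N}

def pRest (C : Set (ModuleCat.{0} A)) : ℕ → Set (ModuleCat.{0} A)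
  | 0 => C
  | k+1 => {M | M ∈ pRest C k ∧ ∀ D ∈ P0set (pRest C k), ¬ Summand D M}

def iRest (C : Set (ModuleCat.{0} A)) : ℕ → Set (ModuleCat.{0} A)
  | 0 => C
  | k+1 => {M | M ∈ iRest C k ∧ ∀ D ∈ I0set (iRest C k), ¬ Summand D M}

def Ppart (C : Set (ModuleCat.{0} A)) (k : ℕ) : Set (ModuleCat.{0} A) := P0set (pRest C k)

def Ipart (C : Set (ModuleCat.{0} A)) (k : ℕ) : Set (ModuleCat.{0} A) := I0set (iRest C k)

def Pinf (C : Set (ModuleCat.{0} A)) : Set (ModuleCat.{0} A) :=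
  {M | M ∈ C ∧ Indec M ∧ ∀ k, M ∉ Ppart C k}

def Iinf (C : Set (ModuleCat.{0} A)) : Set (ModuleCat.{0} A) :=
  {M | M ∈ C ∧ Indec M ∧ ∀ k, M ∉ Ipart C k}

def IsCover (D C : Set (ModuleCat.{0} A)) : Prop :=
  ∀ X ∈ C, ∃ Y : ModuleCat.{0} A, InAdd D Y ∧ ∃ f : Y ⟶ X, Epi f

def IsCocover (D C : Set (ModuleCat.{0} A)) : Prop :=
  ∀ X ∈ C, ∃ Y : ModuleCat.{0} A, InAdd D Y ∧ ∃ f : X ⟶ Y, Mono f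

def Resolving (C : Set (ModuleCat.{0} A)) : Prop :=
  (∀ P : ModuleCat.{0} A, Module.Finite A P → Projective P → Indec P → P ∈ C) ∧
  (∀ (X Y Z : ModuleCat.{0} A) (f : X ⟶ Y) (g : Y ⟶ Z), Mono f → Epi g →
      Function.Exact f g → X ∈ C → Z ∈ C → Y ∈ C) ∧
  (∀ (X Y Z : ModuleCat.{0} A) (f : X ⟶ Y) (g : Y ⟶ Z), Mono f → Epi g →
      Function.Exact f g → Y ∈ C → Z ∈ C → X ∈ C)

def Coresolving (C : Set (ModuleCat.{0} A)) : Prop :=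
  (∀ I : ModuleCat.{0} A, Module.Finite A I → Injective I → Indec I → I ∈ C) ∧
  (∀ (X Y Z : ModuleCat.{0} A) (f : X ⟶ Y) (g : Y ⟶ Z), Mono f → Epi g →
      Function.Exact f g → X ∈ C → Z ∈ C → Y ∈ C) ∧
  (∀ (X Y Z : ModuleCat.{0} A) (f : X ⟶ Y) (g : Y ⟶ Z), Mono f → Epi g →
      Function.Exact f g → X ∈ C → Y ∈ C → Z ∈ C)

def CovariantlyFinite (C : Set (ModuleCat.{0} A)) : Prop :=
  ∀ D : ModuleCat.{0} A, Module.Finite A D → ∃ C' : ModuleCat.{0} A, InAdd C C' ∧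
    ∃ f : D ⟶ C', ∀ X ∈ C, ∀ g : D ⟶ X, ∃ h : C' ⟶ X, f ≫ h = g

def ContravariantlyFinite (C : Set (ModuleCat.{0} A)) : Prop :=
  ∀ D : ModuleCat.{0} A, Module.Finite A D → ∃ C' : ModuleCat.{0} A, InAdd C C' ∧
    ∃ f : C' ⟶ D, ∀ X ∈ C, ∀ g : X ⟶ D, ∃ h : X ⟶ C', h ≫ f = g

def FinRep (S : Set (ModuleCat.{0} A)) : Prop :=
  ∃ (ι : Type) (_ : Finite ι) (rep : ι → ModuleCat.{0} A),
    ∀ M ∈ S, ∃ i, Nonempty (M ≅ rep i)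

def IsProjCover {P S : ModuleCat.{0} A} (π : P ⟶ S) : Prop :=
  Projective P ∧ Epi π ∧ ∀ (Q : ModuleCat.{0} A) (g : Q ⟶ P), Epi (g ≫ π) → Epi g

def IsInjEnv {S I : ModuleCat.{0} A} (ι : S ⟶ I) : Prop :=
  Injective I ∧ Mono ι ∧ ∀ (Q : ModuleCat.{0} A) (g : I ⟶ Q), Mono (ι ≫ g) → Mono g

def modfg (A : Type) [Ring A] : Set (ModuleCat.{0} A) := {X | Module.Finite A X}

def HasDeltaFiltration {A : Type} [Ring A] {n : ℕ} (Δ : Fin n → ModuleCat.{0} A)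
    (M : ModuleCat.{0} A) : Prop :=
  ∃ (s : ℕ) (c : Fin (s+1) → Submodule A M),
    Monotone c ∧ c 0 = ⊥ ∧ c (Fin.last s) = ⊤ ∧
    ∀ i : Fin s, ∃ j : Fin n,
      Nonempty ((↥(c i.succ) ⧸ Submodule.comap (c i.succ).subtype (c i.castSucc))
          ≃ₗ[A] ↥(Δ j))

def FDelta {A : Type} [Ring A] {n : ℕ} (Δ : Fin n → ModuleCat.{0} A) :
    Set (ModuleCat.{0} A) :=
  {M | Module.Finite A M ∧ HasDeltaFiltration Δ M}


noncomputable section Stmt9Aux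

open CategoryTheory Filter

variable {A : Type} [Ring A]

/-! ### Pointwise lemmas for `ModuleCat` morphisms -/

@[simp] lemma mc_comp_apply {X Y Z : ModuleCat.{0} A} (f : X ⟶ Y) (g : Y ⟶ Z) (x : X) :
    (f ≫ g) x = g (f x) := rfl

@[simp] lemma mc_id_apply {X : ModuleCat.{0} A} (x : X) : (𝟙 X : X ⟶ X) x = x := rfl

@[simp] lemma mc_add_apply {X Y : ModuleCat.{0} A} (f g : X ⟶ Y) (x : X) :
    (f + g) x = f x + g x := rfl

@[simp] lemma mc_zero_apply {X Y : ModuleCat.{0} A} (x : X) : (0 : X ⟶ Y) x = 0 := rfl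

@[simp] lemma mc_neg_apply {X Y : ModuleCat.{0} A} (f : X ⟶ Y) (x : X) : (-f) x = -(f x) := rfl

lemma hom_ext' {X Y : ModuleCat.{0} A} {f g : X ⟶ Y} (h : ∀ x, f x = g x) : f = g :=
  ModuleCat.hom_ext (LinearMap.ext h)

lemma eq_app {X Y : ModuleCat.{0} A} {f g : X ⟶ Y} (h : f = g) (x : X) : f x = g x := by rw [h]

lemma subsingleton_of_id_eq_zero (X : ModuleCat.{0} A) (h : (𝟙 X : X ⟶ X) = 0) :
    Subsingleton X := by
  constructor
  intro a b
  have ha := eq_app h a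
  have hb := eq_app h b
  simp only [mc_id_apply, mc_zero_apply] at ha hb
  rw [ha, hb]

/-! ### Product gadgets -/

def pfst (M N : ModuleCat.{0} A) : ModuleCat.of A (M × N) ⟶ M :=
  ModuleCat.ofHom (LinearMap.fst A M N)

def psnd (M N : ModuleCat.{0} A) : ModuleCat.of A (M × N) ⟶ N :=
  ModuleCat.ofHom (LinearMap.snd A M N)

def pinl (M N : ModuleCat.{0} A) : M ⟶ ModuleCat.of A (M × N) :=
  ModuleCat.ofHom (LinearMap.inl A M N)

def pinr (M N : ModuleCat.{0} A) : N ⟶ ModuleCat.of A (M × N) :=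
  ModuleCat.ofHom (LinearMap.inr A M N)

@[simp] lemma pfst_apply (M N : ModuleCat.{0} A) (x : ↥M × ↥N) : pfst M N x = x.1 := rfl
@[simp] lemma psnd_apply (M N : ModuleCat.{0} A) (x : ↥M × ↥N) : psnd M N x = x.2 := rfl
@[simp] lemma pinl_apply (M N : ModuleCat.{0} A) (x : M) : pinl M N x = (x, 0) := rfl
@[simp] lemma pinr_apply (M N : ModuleCat.{0} A) (x : N) : pinr M N x = (0, x) := rfl

lemma proj_sum (M N : ModuleCat.{0} A) :
    pfst M N ≫ pinl M N + psnd M N ≫ pinr M N = 𝟙 (ModuleCat.of A (M × N)) :=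
  hom_ext' fun x => by
    simp only [mc_comp_apply, mc_add_apply, mc_id_apply, pfst_apply, psnd_apply,
      pinl_apply, pinr_apply]
    exact Prod.ext_iff.mpr ⟨add_zero x.1, zero_add x.2⟩

lemma inv_app_app {X Y : ModuleCat.{0} A} (w : X ⟶ Y) [IsIso w] (x : X) :
    (inv w) (w x) = x := by
  have := eq_app (IsIso.hom_inv_id w) x
  simp only [mc_comp_apply, mc_id_apply] at this
  exact this

lemma app_inv_app {X Y : ModuleCat.{0} A} (w : X ⟶ Y) [IsIso w] (y : Y) :
    w ((inv w) y) = y := by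
  have := eq_app (IsIso.inv_hom_id w) y
  simp only [mc_comp_apply, mc_id_apply] at this
  exact this

/-! ### Summand basics -/

lemma Summand.trans {X Y Z : ModuleCat.{0} A} (h1 : Summand X Y) (h2 : Summand Y Z) :
    Summand X Z := by
  obtain ⟨i, r, hir⟩ := h1
  obtain ⟨i', r', hir'⟩ := h2
  refine ⟨i ≫ i', r' ≫ r, hom_ext' fun x => ?_⟩
  have h1 := eq_app hir
  have h2 := eq_app hir'
  simp only [mc_comp_apply, mc_id_apply] at h1 h2 ⊢
  rw [h2, h1]

lemma summand_of_iso {X Y : ModuleCat.{0} A} (e : X ≅ Y) : Summand Y X :=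
  ⟨e.inv, e.hom, e.inv_hom_id⟩

/-- A common summand of an indecomposable with an indecomposable is an isomorphism. -/
lemma indec_summand_iso {X Y : ModuleCat.{0} A} (hX : Indec X) (hY : Indec Y)
    (h : Summand X Y) : Nonempty (X ≅ Y) := by
  obtain ⟨i, r, hir⟩ := h
  have hirx : ∀ x : X, r (i x) = x := fun x => by
    have := eq_app hir x; simpa using this
  rcases hY.2 (r ≫ i) (hom_ext' fun x => by simp [hirx]) with h0 | h1
  · exfalso
    apply hX.1
    have h0x : ∀ y : Y, i (r y) = 0 := fun y => by
      have := eq_app h0 y; simpa using this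
    have : ∀ x : X, x = 0 := fun x => by
      have h1 : i x = 0 := by
        have := h0x (i x); rwa [hirx x] at this
      rw [← hirx x, h1, map_zero]
    exact ⟨fun a b => by rw [this a, this b]⟩
  · exact ⟨⟨i, r, hir, h1⟩⟩

/-! ### relRad basics -/

lemma relRad_postcomp {C : Set (ModuleCat.{0} A)} {M L N : ModuleCat.{0} A} {f : M ⟶ L}
    (hf : f ∈ relRad C M L) (b : L ⟶ N) : f ≫ b ∈ relRad C M N := by
  intro X hX hXi g h hiso
  refine hf X hX hXi g (b ≫ h) ?_
  simp only [Category.assoc] at hiso ⊢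
  exact hiso

lemma relRad_precomp {C : Set (ModuleCat.{0} A)} {M L N : ModuleCat.{0} A} {f : L ⟶ N}
    (hf : f ∈ relRad C L N) (a : M ⟶ L) : a ≫ f ∈ relRad C M N := by
  intro X hX hXi g h hiso
  refine hf X hX hXi (g ≫ a) h ?_
  simp only [Category.assoc] at hiso ⊢
  exact hiso

/-- Any map into an indecomposable which is not a summand of the source is radical. -/
lemma relRad_of_not_summand_to {C : Set (ModuleCat.{0} A)} {Y D : ModuleCat.{0} A}
    (hD : Indec D) (hns : ¬ Summand D Y) (h : Y ⟶ D) : h ∈ relRad C Y D := by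
  intro X _ hXind g h' hiso
  set w : X ⟶ X := g ≫ h ≫ h' with hw
  haveI : IsIso w := hiso
  have hw1 : ∀ x : X, (inv w) (w x) = x := fun x => inv_app_app w x
  have hw2 : ∀ x : X, w ((inv w) x) = x := fun x => app_inv_app w x
  have hwapp : ∀ x : X, w x = h' (h (g x)) := fun _ => rfl
  set e : D ⟶ D := h' ≫ inv w ≫ g ≫ h with he
  have heapp : ∀ y : D, e y = h (g ((inv w) (h' y))) := fun _ => rfl
  have hee : e ≫ e = e := by
    refine hom_ext' fun y => ?_
    show e (e y) = e y
    have key : h' (e y) = h' y := by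
      calc h' (e y) = w ((inv w) (h' y)) := rfl
        _ = h' y := hw2 _
    rw [heapp (e y), key, ← heapp y]
  rcases hD.2 e hee with h0 | h1
  · -- e = 0 forces X to be trivial
    have h0x : ∀ y : D, e y = 0 := fun y => by
      have := eq_app h0 y; simpa using this
    have hwz : ∀ x : X, w x = 0 := fun x => by
      have key : h (g ((inv w) (w x))) = 0 := by
        have : h (g ((inv w) (h' (h (g x))))) = 0 := by
          have := h0x (h (g x)); rwa [heapp] at this
        rwa [← hwapp] at this
      calc w x = w ((inv w) (w x)) := (hw2 _).symm
        _ = h' (h (g ((inv w) (w x)))) := rfl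
        _ = h' 0 := by rw [key]
        _ = 0 := map_zero _
    apply hXind.1
    have : ∀ x : X, x = 0 := fun x => by
      rw [← hw1 x, hwz x, map_zero]
    exact ⟨fun a b => by rw [this a, this b]⟩
  · -- e = 𝟙 D gives a splitting of D off Y
    exact hns ⟨h' ≫ inv w ≫ g, h, by
      simp only [Category.assoc]
      exact h1⟩

/-- Any map out of an indecomposable which is not a summand of the target is radical. -/
lemma relRad_of_not_summand_from {C : Set (ModuleCat.{0} A)} {Y D : ModuleCat.{0} A}
    (hD : Indec D) (hns : ¬ Summand D Y) (h : D ⟶ Y) : h ∈ relRad C D Y := by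
  intro X _ hXind g h' hiso
  set w : X ⟶ X := g ≫ h ≫ h' with hw
  haveI : IsIso w := hiso
  have hw1 : ∀ x : X, (inv w) (w x) = x := fun x => inv_app_app w x
  have hw2 : ∀ x : X, w ((inv w) x) = x := fun x => app_inv_app w x
  have hwapp : ∀ x : X, w x = h' (h (g x)) := fun _ => rfl
  set e : D ⟶ D := h ≫ h' ≫ inv w ≫ g with he
  have heapp : ∀ y : D, e y = g ((inv w) (h' (h y))) := fun _ => rfl
  have hee : e ≫ e = e := by
    refine hom_ext' fun y => ?_
    show e (e y) = e y
    have key : h' (h (e y)) = h' (h y) := by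
      calc h' (h (e y)) = w ((inv w) (h' (h y))) := rfl
        _ = h' (h y) := hw2 _
    rw [heapp (e y), key, ← heapp y]
  rcases hD.2 e hee with h0 | h1
  · have h0x : ∀ y : D, e y = 0 := fun y => by
      have := eq_app h0 y; simpa using this
    have hwz : ∀ x : X, w x = 0 := fun x => by
      have key : g ((inv w) (w x)) = 0 := by
        have := h0x (g x); rwa [heapp, ← hwapp] at this
      calc w x = w ((inv w) (w x)) := (hw2 _).symm
        _ = h' (h (g ((inv w) (w x)))) := rfl
        _ = h' (h 0) := by rw [key]
        _ = 0 := by rw [map_zero, map_zero]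
    apply hXind.1
    have : ∀ x : X, x = 0 := fun x => by
      rw [← hw1 x, hwz x, map_zero]
    exact ⟨fun a b => by rw [this a, this b]⟩
  · exact hns ⟨h, h' ≫ inv w ≫ g, h1⟩

/-! ### radPow calculus -/

lemma radPow_zero (C : Set (ModuleCat.{0} A)) (M N : ModuleCat.{0} A) :
    radPow C 0 M N = ⊤ := rfl

lemma radPow_succ (C : Set (ModuleCat.{0} A)) (m : ℕ) (M N : ModuleCat.{0} A) :
    radPow C (m+1) M N = AddSubgroup.closure
      {f | ∃ (L : ModuleCat.{0} A) (g : M ⟶ L) (h : L ⟶ N),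
        g ∈ radPow C m M L ∧ h ∈ relRad C L N ∧ f = g ≫ h} := rfl

lemma mem_radPow_succ_of {C : Set (ModuleCat.{0} A)} {m : ℕ} {M L N : ModuleCat.{0} A}
    {g : M ⟶ L} {h : L ⟶ N} (hg : g ∈ radPow C m M L) (hh : h ∈ relRad C L N) :
    g ≫ h ∈ radPow C (m+1) M N :=
  AddSubgroup.subset_closure ⟨L, g, h, hg, hh, rfl⟩

lemma radPow_postcomp (C : Set (ModuleCat.{0} A)) :
    ∀ (m : ℕ) {M N L : ModuleCat.{0} A} (f : M ⟶ N), f ∈ radPow C m M N →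
      ∀ (b : N ⟶ L), f ≫ b ∈ radPow C m M L := by
  intro m
  induction m with
  | zero => intro M N L f _ b; exact AddSubgroup.mem_top _
  | succ m _ =>
    intro M N L f hf b
    rw [radPow_succ] at hf
    refine AddSubgroup.closure_induction ?_ ?_ ?_ ?_ hf
    · rintro x ⟨L', g, h, hg, hh, rfl⟩
      rw [Category.assoc]
      exact mem_radPow_succ_of hg (relRad_postcomp hh b)
    · rw [Limits.zero_comp]; exact zero_mem _
    · intro x y _ _ px py
      rw [Preadditive.add_comp]
      exact add_mem px py
    · intro x _ px
      rw [Preadditive.neg_comp]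
      exact neg_mem px

lemma radPow_precomp (C : Set (ModuleCat.{0} A)) :
    ∀ (m : ℕ) {M N L : ModuleCat.{0} A} (f : M ⟶ N), f ∈ radPow C m M N →
      ∀ (a : L ⟶ M), a ≫ f ∈ radPow C m L N := by
  intro m
  induction m with
  | zero => intro M N L f _ a; exact AddSubgroup.mem_top _
  | succ m ih =>
    intro M N L f hf a
    rw [radPow_succ] at hf
    refine AddSubgroup.closure_induction ?_ ?_ ?_ ?_ hf
    · rintro x ⟨L', g, h, hg, hh, rfl⟩
      rw [← Category.assoc]
      exact mem_radPow_succ_of (ih g hg a) hh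
    · rw [Limits.comp_zero]; exact zero_mem _
    · intro x y _ _ px py
      rw [Preadditive.comp_add]
      exact add_mem px py
    · intro x _ px
      rw [Preadditive.comp_neg]
      exact neg_mem px

lemma radPow_succ_le (C : Set (ModuleCat.{0} A)) :
    ∀ (m : ℕ) (M N : ModuleCat.{0} A), radPow C (m+1) M N ≤ radPow C m M N := by
  intro m
  induction m with
  | zero => intro M N; exact le_top
  | succ m ih =>
    intro M N
    rw [radPow_succ C (m+1)]
    refine (AddSubgroup.closure_le _).mpr ?_
    rintro x ⟨L', g, h, hg, hh, rfl⟩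
    exact mem_radPow_succ_of (ih _ _ hg) hh

lemma radPow_mono (C : Set (ModuleCat.{0} A)) {m m' : ℕ} (h : m ≤ m')
    (M N : ModuleCat.{0} A) : radPow C m' M N ≤ radPow C m M N := by
  induction h with
  | refl => exact le_rfl
  | step h ih => exact le_trans (radPow_succ_le C _ M N) ih

lemma relRad_comp_radPow (C : Set (ModuleCat.{0} A)) :
    ∀ (m : ℕ) {M L N : ModuleCat.{0} A} (a : M ⟶ L) (b : L ⟶ N),
      a ∈ relRad C M L → b ∈ radPow C m L N → a ≫ b ∈ radPow C (m+1) M N := by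
  intro m
  induction m with
  | zero =>
    intro M L N a b ha _
    have : (𝟙 M) ≫ (a ≫ b) ∈ radPow C 1 M N :=
      mem_radPow_succ_of (AddSubgroup.mem_top _) (relRad_postcomp ha b)
    rwa [Category.id_comp] at this
  | succ m ih =>
    intro M L N a b ha hb
    rw [radPow_succ] at hb
    refine AddSubgroup.closure_induction ?_ ?_ ?_ ?_ hb
    · rintro x ⟨L', g, h, hg, hh, rfl⟩
      rw [← Category.assoc]
      exact mem_radPow_succ_of (ih a g ha hg) hh
    · rw [Limits.comp_zero]; exact zero_mem _
    · intro x y _ _ px py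
      rw [Preadditive.comp_add]
      exact add_mem px py
    · intro x _ px
      rw [Preadditive.comp_neg]
      exact neg_mem px

/-! ### Fitting-type lemmas -/

/-- Every endomorphism of a finite indecomposable module is invertible or nilpotent. -/
lemma nilp_or_iso (k : Type) [Field k] [Algebra k A] [FiniteDimensional k A] (X : ModuleCat.{0} A) (hfin : Module.Finite A X) (hX : Indec X)
    (f : X ⟶ X) : IsIso f ∨ IsNilpotent (show Module.End A ↥X from f.hom) := by
  letI iX : Module k ↥X := Module.compHom ↥X (algebraMap k A)
  haveI tX : IsScalarTower k A ↥X := ⟨fun c a x => by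
    show (c • a) • x = algebraMap k A c • (a • x)
    rw [Algebra.smul_def, mul_smul]⟩
  haveI : Module.Finite k ↥X := Module.Finite.trans A ↥X
  haveI hnoeth : IsNoetherian A ↥X := isNoetherian_of_tower k inferInstance
  haveI hart : IsArtinian A ↥X := isArtinian_of_tower k inferInstance
  set F : Module.End A ↥X := (show ↥X →ₗ[A] ↥X from f.hom) with hF
  obtain ⟨nn, hcompl, hpos⟩ :
      ∃ n, IsCompl (LinearMap.ker (F ^ n)) (LinearMap.range (F ^ n)) ∧ 0 < n := by
    obtain ⟨n, hn⟩ :=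
      ((F.eventually_isCompl_ker_pow_range_pow).and (eventually_gt_atTop 0)).exists
    exact ⟨n, hn.1, hn.2⟩
  set p : Submodule A ↥X := LinearMap.range (F ^ nn) with hp
  set q : Submodule A ↥X := LinearMap.ker (F ^ nn) with hq
  set e : X ⟶ X :=
    (ModuleCat.ofHom (p.subtype ∘ₗ Submodule.projectionOnto p q hcompl.symm))
    with he
  have heapp : ∀ x : ↥X, e x = (Submodule.projectionOnto p q hcompl.symm x : ↥X) :=
    fun _ => rfl
  have hemem : ∀ x : ↥X, e x ∈ p := fun x =>
    (Submodule.projectionOnto p q hcompl.symm x).2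
  have heleft : ∀ x : ↥X, x ∈ p → e x = x := fun x hx => by
    rw [heapp]
    have := Submodule.projectionOnto_apply_left hcompl.symm ⟨x, hx⟩
    rw [show ((⟨x, hx⟩ : p) : ↥X) = x from rfl] at this
    rw [this]
  have heright : ∀ x : ↥X, x ∈ q → e x = 0 := fun x hx => by
    rw [heapp]
    rw [(Submodule.projectionOnto_apply_eq_zero_iff hcompl.symm).mpr hx]
    rfl
  have hee : e ≫ e = e := hom_ext' fun x => by
    show e (e x) = e x
    exact heleft _ (hemem x)
  rcases hX.2 e hee with h0 | h1
  · -- e = 0 : range (F ^ nn) = ⊥, so F is nilpotent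
    right
    refine ⟨nn, ?_⟩
    apply LinearMap.ext
    intro x
    have hmem : (F ^ nn) x ∈ p := LinearMap.mem_range_self _ x
    have := heleft _ hmem
    rw [eq_app h0 ((F ^ nn) x)] at this
    simp only [mc_zero_apply] at this
    rw [LinearMap.zero_apply]
    exact this.symm
  · -- e = 𝟙 X : ker (F ^ nn) = ⊥, so F is injective, hence bijective
    left
    have hker : ∀ x : ↥X, x ∈ q → x = 0 := fun x hx => by
      have := heright x hx
      rw [eq_app h1 x] at this
      simpa using this
    have hinj : Function.Injective F := by
      intro x y hxy
      have hsub : F (x - y) = 0 := by rw [map_sub, hxy, sub_self]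
      obtain ⟨m, rfl⟩ : ∃ m, nn = m + 1 := ⟨nn - 1, by omega⟩
      have : (F ^ (m+1)) (x - y) = 0 := by
        rw [pow_succ, Module.End.mul_apply, hsub, map_zero]
      have := hker _ this
      rwa [sub_eq_zero] at this
    have hbij := IsArtinian.bijective_of_injective_endomorphism F hinj
    let eqv : ↥X ≃ₗ[A] ↥X := LinearEquiv.ofBijective F hbij
    refine ⟨ModuleCat.ofHom eqv.symm.toLinearMap, ?_, ?_⟩
    · exact hom_ext' fun x => eqv.symm_apply_apply x
    · exact hom_ext' fun x => eqv.apply_symm_apply x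

/-- In the endomorphism ring of a finite indecomposable module, the complement of a
non-isomorphism in a decomposition of the identity is an isomorphism. -/
lemma isIso_of_partner (k : Type) [Field k] [Algebra k A] [FiniteDimensional k A] (X : ModuleCat.{0} A) (hfin : Module.Finite A X) (hX : Indec X)
    (a b : X ⟶ X) (hab : a + b = 𝟙 X) (ha : ¬ IsIso a) : IsIso b := by
  rcases nilp_or_iso k X hfin hX a with h | hnil
  · exact absurd h ha
  · have hb : (show Module.End A ↥X from b.hom) =
        1 - (show Module.End A ↥X from a.hom) := by
      have : b = 𝟙 X - a := eq_sub_of_add_eq' hab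
      exact congrArg ModuleCat.Hom.hom this
    have hu : IsUnit ((1 : Module.End A ↥X) - (show Module.End A ↥X from a.hom)) :=
      hnil.isUnit_one_sub
    rw [← hb] at hu
    obtain ⟨u, hu⟩ := hu
    refine ⟨ModuleCat.ofHom (↑u⁻¹ : Module.End A ↥X), ?_, ?_⟩
    · -- b ≫ inv = 𝟙
      refine hom_ext' fun x => ?_
      have : ((↑u⁻¹ * ↑u : Module.End A ↥X)) x = x := by
        rw [Units.inv_mul]; rfl
      rw [hu] at this
      exact this
    · refine hom_ext' fun x => ?_
      have : ((↑u * ↑u⁻¹ : Module.End A ↥X)) x = x := by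
        rw [Units.mul_inv]; rfl
      rw [hu] at this
      exact this

/-- Krull–Schmidt-style extraction: an indecomposable summand of an additive closure is
isomorphic to one of the generators. -/
lemma ks (k : Type) [Field k] [Algebra k A] [FiniteDimensional k A] {S : Set (ModuleCat.{0} A)} (hS : ∀ D ∈ S, Indec D)
    {Y : ModuleCat.{0} A} (hY : InAdd S Y) :
    ∀ {X : ModuleCat.{0} A}, Module.Finite A X → Indec X → Summand X Y →
      ∃ D ∈ S, Nonempty (X ≅ D) := by
  induction hY with
  | base h =>
    intro X _ hX hsum
    exact ⟨_, h, indec_summand_iso hX (hS _ h) hsum⟩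
  | @prod M' N' hM hN ihM ihN =>
    intro X hfX hX hsum
    obtain ⟨i, r, hir⟩ := hsum
    set a : X ⟶ X := i ≫ (pfst M' N' ≫ pinl M' N') ≫ r with hadef
    set b : X ⟶ X := i ≫ (psnd M' N' ≫ pinr M' N') ≫ r with hbdef
    have hab : a + b = 𝟙 X := by
      rw [hadef, hbdef, ← Preadditive.comp_add, ← Preadditive.add_comp, proj_sum,
        Category.id_comp, hir]
    by_cases hia : IsIso a
    · refine ihM hfX hX ⟨i ≫ pfst M' N', (pinl M' N' ≫ r) ≫ inv a, ?_⟩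
      have h1 : (i ≫ pfst M' N') ≫ (pinl M' N' ≫ r) = a := by
        rw [hadef]; simp only [Category.assoc]
      rw [← Category.assoc, h1, IsIso.hom_inv_id]
    · have hib : IsIso b := isIso_of_partner k X hfX hX a b hab hia
      refine ihN hfX hX ⟨i ≫ psnd M' N', (pinr M' N' ≫ r) ≫ inv b, ?_⟩
      have h1 : (i ≫ psnd M' N') ≫ (pinr M' N' ≫ r) = b := by
        rw [hbdef]; simp only [Category.assoc]
      rw [← Category.assoc, h1, IsIso.hom_inv_id]
  | summand _ hsum ih =>
    intro X hfX hX hs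
    exact ih hfX hX (hs.trans hsum)


/-! ### Split epis/monos and glue lemmas -/

lemma epi_of_retraction {D M : ModuleCat.{0} A} {i : D ⟶ M} {r : M ⟶ D}
    (h : i ≫ r = 𝟙 D) : Epi r :=
  (⟨⟨⟨i, h⟩⟩⟩ : IsSplitEpi r).epi

lemma mono_of_section {D M : ModuleCat.{0} A} {i : D ⟶ M} {r : M ⟶ D}
    (h : i ≫ r = 𝟙 D) : Mono i :=
  (⟨⟨⟨r, h⟩⟩⟩ : IsSplitMono i).mono

lemma glueEpi (C T S : Set (ModuleCat.{0} A)) (m : ℕ)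
    (hall : ∀ D ∈ S, ∃ Z, InAdd T Z ∧ ∃ f : Z ⟶ D, Epi f ∧ f ∈ radPow C m Z D) :
    ∀ Y, InAdd S Y → ∃ Z, InAdd T Z ∧ ∃ f : Z ⟶ Y, Epi f ∧ f ∈ radPow C m Z Y := by
  intro Y hY
  induction hY with
  | base h => exact hall _ h
  | @prod M' N' _ _ ihM ihN =>
    obtain ⟨Z1, hZ1, f1, hf1e, hf1r⟩ := ihM
    obtain ⟨Z2, hZ2, f2, hf2e, hf2r⟩ := ihN
    refine ⟨ModuleCat.of A (Z1 × Z2), InAdd.prod hZ1 hZ2,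
      pfst Z1 Z2 ≫ f1 ≫ pinl M' N' + psnd Z1 Z2 ≫ f2 ≫ pinr M' N', ?_, ?_⟩
    · rw [ModuleCat.epi_iff_surjective]
      intro p
      obtain ⟨x, hx⟩ := (ModuleCat.epi_iff_surjective f1).mp hf1e p.1
      obtain ⟨y, hy⟩ := (ModuleCat.epi_iff_surjective f2).mp hf2e p.2
      refine ⟨(x, y), ?_⟩
      simp only [mc_add_apply, mc_comp_apply, pfst_apply, psnd_apply, pinl_apply, pinr_apply]
      show (f1 x + 0, 0 + f2 y) = p
      rw [hx, hy]
      exact Prod.ext_iff.mpr ⟨add_zero p.1, zero_add p.2⟩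
    · exact add_mem
        (radPow_precomp C m _ (radPow_postcomp C m f1 hf1r (pinl M' N')) (pfst Z1 Z2))
        (radPow_precomp C m _ (radPow_postcomp C m f2 hf2r (pinr M' N')) (psnd Z1 Z2))
  | @summand D M' _ hsum ih =>
    obtain ⟨Z, hZ, f, hfe, hfr⟩ := ih
    obtain ⟨i, r, hir⟩ := hsum
    haveI := hfe
    haveI := epi_of_retraction hir
    exact ⟨Z, hZ, f ≫ r, epi_comp f r, radPow_postcomp C m f hfr r⟩

lemma glueMono (C T S : Set (ModuleCat.{0} A)) (m : ℕ)
    (hall : ∀ D ∈ S, ∃ Z, InAdd T Z ∧ ∃ f : D ⟶ Z, Mono f ∧ f ∈ radPow C m D Z) :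
    ∀ Y, InAdd S Y → ∃ Z, InAdd T Z ∧ ∃ f : Y ⟶ Z, Mono f ∧ f ∈ radPow C m Y Z := by
  intro Y hY
  induction hY with
  | base h => exact hall _ h
  | @prod M' N' _ _ ihM ihN =>
    obtain ⟨Z1, hZ1, f1, hf1m, hf1r⟩ := ihM
    obtain ⟨Z2, hZ2, f2, hf2m, hf2r⟩ := ihN
    refine ⟨ModuleCat.of A (Z1 × Z2), InAdd.prod hZ1 hZ2,
      pfst M' N' ≫ f1 ≫ pinl Z1 Z2 + psnd M' N' ≫ f2 ≫ pinr Z1 Z2, ?_, ?_⟩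
    · rw [ModuleCat.mono_iff_injective]
      intro p q hpq
      simp only [mc_add_apply, mc_comp_apply, pfst_apply, psnd_apply, pinl_apply,
        pinr_apply] at hpq
      have h1 : f1 p.1 + 0 = f1 q.1 + 0 := by have := congrArg Prod.fst hpq; exact this
      have h2 : (0 : ↥Z2) + f2 p.2 = 0 + f2 q.2 := by have := congrArg Prod.snd hpq; exact this
      rw [add_zero, add_zero] at h1
      rw [zero_add, zero_add] at h2
      have e1 := (ModuleCat.mono_iff_injective f1).mp hf1m h1
      have e2 := (ModuleCat.mono_iff_injective f2).mp hf2m h2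
      exact Prod.ext_iff.mpr ⟨e1, e2⟩
    · exact add_mem
        (radPow_precomp C m _ (radPow_postcomp C m f1 hf1r (pinl Z1 Z2)) (pfst M' N'))
        (radPow_precomp C m _ (radPow_postcomp C m f2 hf2r (pinr Z1 Z2)) (psnd M' N'))
  | @summand D M' _ hsum ih =>
    obtain ⟨Z, hZ, f, hfm, hfr⟩ := ih
    obtain ⟨i, r, hir⟩ := hsum
    haveI := hfm
    haveI := mono_of_section hir
    exact ⟨Z, hZ, i ≫ f, mono_comp i f, radPow_precomp C m f hfr i⟩

/-! ### Partition bookkeeping -/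

lemma pRest_succ_sub (C : Set (ModuleCat.{0} A)) (m : ℕ) :
    pRest C (m+1) ⊆ pRest C m := fun _ hM => hM.1

lemma pRest_sub (C : Set (ModuleCat.{0} A)) (m : ℕ) : pRest C m ⊆ C := by
  induction m with
  | zero => exact fun _ h => h
  | succ m ih => exact fun M hM => ih (pRest_succ_sub C m hM)

lemma iRest_succ_sub (C : Set (ModuleCat.{0} A)) (m : ℕ) :
    iRest C (m+1) ⊆ iRest C m := fun _ hM => hM.1

lemma iRest_sub (C : Set (ModuleCat.{0} A)) (m : ℕ) : iRest C m ⊆ C := by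
  induction m with
  | zero => exact fun _ h => h
  | succ m ih => exact fun M hM => ih (iRest_succ_sub C m hM)

/-- A module in `Pinf C` survives every layer of the postprojective partition. -/
lemma pinf_mem_pRest {C : Set (ModuleCat.{0} A)} {M : ModuleCat.{0} A}
    (hM : M ∈ Pinf C) : ∀ m, M ∈ pRest C m := by
  intro m
  induction m with
  | zero => exact hM.1
  | succ m ih =>
    refine ⟨ih, fun D hD hsum => ?_⟩
    apply hM.2.2 m
    obtain ⟨i, r, hir⟩ := hsum
    have hirx : ∀ y : D, r (i y) = y := fun y => by
      have := eq_app hir y; simpa using this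
    rcases hM.2.1.2 (r ≫ i) (hom_ext' fun x => by simp [hirx]) with h0 | h1
    · exfalso
      apply hD.2.1.1
      have h0x : ∀ x : ↥M, i (r x) = 0 := fun x => by
        have := eq_app h0 x; simpa using this
      have : ∀ y : D, y = 0 := fun y => by
        have h1 : i y = 0 := by
          have := h0x (i y); rwa [hirx y] at this
        rw [← hirx y, h1, map_zero]
      exact ⟨fun a b => by rw [this a, this b]⟩
    · -- r ≫ i = 𝟙 M, so M is isomorphic to D and belongs to Ppart C m
      have h1x : ∀ x : ↥M, i (r x) = x := fun x => by
        have := eq_app h1 x; simpa using this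
      refine ⟨ih, hM.2.1, fun Y hY f hf => ?_⟩
      haveI := hf
      haveI := epi_of_retraction hir
      obtain ⟨s, hs⟩ := hD.2.2 Y hY (f ≫ r) (epi_comp f r)
      have hsx : ∀ y : D, r (f (s y)) = y := fun y => by
        have := eq_app hs y; simpa using this
      refine ⟨r ≫ s, hom_ext' fun x => ?_⟩
      show f (s (r x)) = x
      have := congrArg i (hsx (r x))
      rw [h1x (f (s (r x))), h1x x] at this
      exact this

/-- A module in `Iinf C` survives every layer of the preinjective partition. -/
lemma iinf_mem_iRest {C : Set (ModuleCat.{0} A)} {M : ModuleCat.{0} A}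
    (hM : M ∈ Iinf C) : ∀ m, M ∈ iRest C m := by
  intro m
  induction m with
  | zero => exact hM.1
  | succ m ih =>
    refine ⟨ih, fun D hD hsum => ?_⟩
    apply hM.2.2 m
    obtain ⟨i, r, hir⟩ := hsum
    have hirx : ∀ y : D, r (i y) = y := fun y => by
      have := eq_app hir y; simpa using this
    rcases hM.2.1.2 (r ≫ i) (hom_ext' fun x => by simp [hirx]) with h0 | h1
    · exfalso
      apply hD.2.1.1
      have h0x : ∀ x : ↥M, i (r x) = 0 := fun x => by
        have := eq_app h0 x; simpa using this
      have : ∀ y : D, y = 0 := fun y => by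
        have h1 : i y = 0 := by
          have := h0x (i y); rwa [hirx y] at this
        rw [← hirx y, h1, map_zero]
      exact ⟨fun a b => by rw [this a, this b]⟩
    · have h1x : ∀ x : ↥M, i (r x) = x := fun x => by
        have := eq_app h1 x; simpa using this
      refine ⟨ih, hM.2.1, fun Y hY f hf => ?_⟩
      haveI := hf
      haveI := mono_of_section hir
      obtain ⟨r', hr'⟩ := hD.2.2 Y hY (i ≫ f) (mono_comp i f)
      have hr'x : ∀ y : D, r' (f (i y)) = y := fun y => by
        have := eq_app hr' y; simpa using this
      refine ⟨r' ≫ i, hom_ext' fun x => ?_⟩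
      show i (r' (f x)) = x
      calc i (r' (f x)) = i (r' (f (i (r x)))) := by rw [h1x x]
        _ = i (r x) := by rw [hr'x (r x)]
        _ = x := h1x x

/-! ### Deep radical covers and cocovers -/

lemma ppart_sub (C : Set (ModuleCat.{0} A)) (m : ℕ) : Ppart C m ⊆ pRest C m :=
  fun _ hD => hD.1

lemma ipart_sub (C : Set (ModuleCat.{0} A)) (m : ℕ) : Ipart C m ⊆ iRest C m :=
  fun _ hD => hD.1

lemma coverRad (k : Type) [Field k] [Algebra k A] [FiniteDimensional k A]
    (C : Set (ModuleCat.{0} A)) (hCfin : ∀ X ∈ C, Module.Finite A X)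
    (hcovers : ∀ m : ℕ, IsCover (Ppart C m) (pRest C m)) :
    ∀ (m : ℕ) (D : ModuleCat.{0} A), D ∈ pRest C m → Indec D →
      ∃ Z, InAdd C Z ∧ ∃ f : Z ⟶ D, Epi f ∧ f ∈ radPow C m Z D := by
  intro m
  induction m with
  | zero =>
    intro D hD _
    exact ⟨D, InAdd.base hD, 𝟙 D, inferInstance, AddSubgroup.mem_top _⟩
  | succ m ih =>
    intro D hD hDind
    obtain ⟨Y, hYadd, f, hfepi⟩ := hcovers m D (pRest_succ_sub C m hD)
    have hfrad : f ∈ relRad C Y D := by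
      refine relRad_of_not_summand_to hDind ?_ f
      intro hsum
      obtain ⟨D', hD', ⟨e⟩⟩ := ks k (fun D'' hD'' => hD''.2.1) hYadd
        (hCfin D (pRest_sub C (m+1) hD)) hDind hsum
      exact hD.2 D' hD' (summand_of_iso e)
    obtain ⟨Z, hZ, u, huepi, hurad⟩ := glueEpi C C (Ppart C m) m
      (fun D'' hD'' => ih D'' hD''.1 hD''.2.1) Y hYadd
    haveI := huepi
    haveI := hfepi
    exact ⟨Z, hZ, u ≫ f, epi_comp u f, mem_radPow_succ_of hurad hfrad⟩

lemma cocoverRad (k : Type) [Field k] [Algebra k A] [FiniteDimensional k A]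
    (C : Set (ModuleCat.{0} A)) (hCfin : ∀ X ∈ C, Module.Finite A X)
    (hcocovers : ∀ m : ℕ, IsCocover (Ipart C m) (iRest C m)) :
    ∀ (m : ℕ) (D : ModuleCat.{0} A), D ∈ iRest C m → Indec D →
      ∃ Z, InAdd (Ipart C 0) Z ∧ ∃ g : D ⟶ Z, Mono g ∧ g ∈ radPow C m D Z := by
  intro m
  induction m with
  | zero =>
    intro D hD _
    obtain ⟨Y, hYadd, g, hgmono⟩ := hcocovers 0 D hD
    exact ⟨Y, hYadd, g, hgmono, AddSubgroup.mem_top _⟩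
  | succ m ih =>
    intro D hD hDind
    obtain ⟨Y, hYadd, h, hhmono⟩ := hcocovers m D (iRest_succ_sub C m hD)
    have hhrad : h ∈ relRad C D Y := by
      refine relRad_of_not_summand_from hDind ?_ h
      intro hsum
      obtain ⟨D', hD', ⟨e⟩⟩ := ks k (fun D'' hD'' => hD''.2.1) hYadd
        (hCfin D (iRest_sub C (m+1) hD)) hDind hsum
      exact hD.2 D' hD' (summand_of_iso e)
    obtain ⟨Z, hZ, v, hvmono, hvrad⟩ := glueMono C (Ipart C 0) (Ipart C m) m
      (fun D'' hD'' => ih D'' hD''.1 hD''.2.1) Y hYadd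
    haveI := hvmono
    haveI := hhmono
    exact ⟨Z, hZ, h ≫ v, mono_comp h v, relRad_comp_radPow C m h v hhrad hvrad⟩

/-! ### Stabilization of the radical filtration -/

def csm (k : Type) [Field k] [Algebra k A] (a : k) (N : ModuleCat.{0} A) : N ⟶ N :=
  ModuleCat.ofHom <| show ↥N →ₗ[A] ↥N from
  { toFun := fun x => algebraMap k A a • x
    map_add' := fun x y => smul_add _ x y
    map_smul' := fun c x => by
      simp only [RingHom.id_apply]
      rw [smul_smul, smul_smul, Algebra.commutes] }

@[simp] lemma csm_apply (k : Type) [Field k] [Algebra k A] (a : k) (N : ModuleCat.{0} A)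
    (x : N) : csm k a N x = algebraMap k A a • x := rfl

lemma radPow_stab (k : Type) [Field k] [Algebra k A] [FiniteDimensional k A]
    (C : Set (ModuleCat.{0} A)) (M N : ModuleCat.{0} A)
    (hM : Module.Finite A M) (hN : Module.Finite A N) :
    ∃ m₀ : ℕ, ∀ m, m₀ ≤ m → radPow C m M N = radPow C m₀ M N := by
  classical
  letI iM : Module k ↥M := Module.compHom ↥M (algebraMap k A)
  letI iN : Module k ↥N := Module.compHom ↥N (algebraMap k A)
  haveI tM : IsScalarTower k A ↥M := ⟨fun c a x => by
    show (c • a) • x = algebraMap k A c • (a • x)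
    rw [Algebra.smul_def, mul_smul]⟩
  haveI tN : IsScalarTower k A ↥N := ⟨fun c a x => by
    show (c • a) • x = algebraMap k A c • (a • x)
    rw [Algebra.smul_def, mul_smul]⟩
  haveI : Module.Finite k ↥M := Module.Finite.trans A ↥M
  haveI : Module.Finite k ↥N := Module.Finite.trans A ↥N
  haveI : Module.Finite k (↥M →ₗ[k] ↥N) := inferInstance
  haveI : IsArtinian k (↥M →ₗ[k] ↥N) := inferInstance
  set Φ : (M ⟶ N) → (↥M →ₗ[k] ↥N) := fun f =>
    { toFun := f
      map_add' := map_add f.hom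
      map_smul' := fun c x => by
        show f (algebraMap k A c • x) = algebraMap k A c • f x
        exact map_smul f.hom (algebraMap k A c) x } with hΦ
  have hΦinj : Function.Injective Φ := by
    intro f g h
    exact hom_ext' fun x => DFunLike.congr_fun h x
  have hW : ∀ m : ℕ, ∃ W : Submodule k (↥M →ₗ[k] ↥N),
      (W : Set (↥M →ₗ[k] ↥N)) = Φ '' (radPow C m M N : Set (M ⟶ N)) := by
    intro m
    refine ⟨{ carrier := Φ '' (radPow C m M N : Set (M ⟶ N))
              add_mem' := ?_
              zero_mem' := ⟨0, zero_mem _, LinearMap.ext fun x => rfl⟩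
              smul_mem' := ?_ }, rfl⟩
    · rintro _ _ ⟨f, hf, rfl⟩ ⟨g, hg, rfl⟩
      exact ⟨f + g, add_mem hf hg, LinearMap.ext fun x => rfl⟩
    · rintro c _ ⟨f, hf, rfl⟩
      refine ⟨f ≫ csm k c N, radPow_postcomp C m f hf (csm k c N), ?_⟩
      refine LinearMap.ext fun x => ?_
      show algebraMap k A c • f x = algebraMap k A c • f x
      rfl
  choose W hWspec using hW
  have hanti : ∀ {a b : ℕ}, a ≤ b → W b ≤ W a := by
    intro a b hab
    intro x hx
    have hx' : x ∈ (W b : Set _) := hx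
    rw [hWspec b] at hx'
    obtain ⟨f, hf, rfl⟩ := hx'
    have : Φ f ∈ (W a : Set _) := by
      rw [hWspec a]
      exact ⟨f, radPow_mono C hab M N hf, rfl⟩
    exact this
  obtain ⟨m₀, hm₀⟩ := IsArtinian.monotone_stabilizes
    (⟨fun m => OrderDual.toDual (W m), fun a b hab => hanti hab⟩ : ℕ →o (Submodule k (↥M →ₗ[k] ↥N))ᵒᵈ)
  refine ⟨m₀, fun m hm => ?_⟩
  have hWeq : W m₀ = W m := hm₀ m hm
  refine le_antisymm (radPow_mono C hm M N) ?_
  intro f hf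
  have h1 : Φ f ∈ (W m₀ : Set _) := by
    rw [hWspec m₀]; exact ⟨f, hf, rfl⟩
  rw [hWeq, hWspec m] at h1
  obtain ⟨g, hg, hgf⟩ := h1
  rwa [← hΦinj hgf]

lemma mem_radInf_of_all {C : Set (ModuleCat.{0} A)} {M N : ModuleCat.{0} A} {f : M ⟶ N}
    (h : ∀ m, f ∈ radPow C m M N) : f ∈ radInf C M N := by
  rw [radInf, AddSubgroup.mem_iInf]
  exact fun n => h (n+1)

/-! ### Vanishing on additive closures -/

lemma vanish_on_add {C : Set (ModuleCat.{0} A)} {S : Set (ModuleCat.{0} A)} {m : ℕ}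
    {M : ModuleCat.{0} A} (h : ∀ D ∈ S, ∀ c : M ⟶ D, c ∈ radPow C m M D → c = 0) :
    ∀ Z, InAdd S Z → ∀ c : M ⟶ Z, c ∈ radPow C m M Z → c = 0 := by
  intro Z hZ
  induction hZ with
  | base hD => exact fun c hc => h _ hD c hc
  | @prod M' N' _ _ ihM ihN =>
    intro c hc
    have h1 : c ≫ pfst M' N' = 0 := ihM _ (radPow_postcomp C m c hc (pfst M' N'))
    have h2 : c ≫ psnd M' N' = 0 := ihN _ (radPow_postcomp C m c hc (psnd M' N'))
    refine hom_ext' fun x => ?_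
    have e1 : (c x).1 = 0 := by
      have := eq_app h1 x; exact this
    have e2 : (c x).2 = 0 := by
      have := eq_app h2 x; exact this
    show c x = 0
    rw [← Prod.mk.eta (p := c x), e1, e2]
    rfl
  | @summand D M' _ hsum ih =>
    intro c hc
    obtain ⟨i, r, hir⟩ := hsum
    have h1 : c ≫ i = 0 := ih _ (radPow_postcomp C m c hc i)
    have hirx : ∀ y : D, r (i y) = y := fun y => by
      have := eq_app hir y; simpa using this
    refine hom_ext' fun x => ?_
    have := eq_app h1 x
    simp only [mc_comp_apply, mc_zero_apply] at this
    show c x = 0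
    rw [← hirx (c x), this, map_zero]

/-! ### FDelta closure properties -/

lemma bot_eq_top_of_subsingleton (X : ModuleCat.{0} A) (hX : Subsingleton ↥X) :
    (⊥ : Submodule A ↥X) = ⊤ := by
  ext x
  simp [Subsingleton.elim x (0 : ↥X)]

lemma fdelta_triv {n : ℕ} (Δ : Fin n → ModuleCat.{0} A) (X : ModuleCat.{0} A)
    (hX : Subsingleton ↥X) : X ∈ FDelta Δ := by
  constructor
  · refine ⟨⟨∅, ?_⟩⟩
    rw [Finset.coe_empty, Submodule.span_empty]
    exact bot_eq_top_of_subsingleton X hX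
  · exact ⟨0, fun _ => ⊥, monotone_const, rfl,
      bot_eq_top_of_subsingleton X hX, fun i => i.elim0⟩

lemma fdelta_iso {n : ℕ} {Δ : Fin n → ModuleCat.{0} A} (hres : Resolving (FDelta Δ))
    {X Y : ModuleCat.{0} A} (e : X ≅ Y) (hX : X ∈ FDelta Δ) : Y ∈ FDelta Δ := by
  have hT : ModuleCat.of A PUnit ∈ FDelta Δ := fdelta_triv Δ _ inferInstance
  refine hres.2.1 X Y (ModuleCat.of A PUnit) e.hom
    (ModuleCat.ofHom (show ↥Y →ₗ[A] PUnit from 0)) inferInstance ?_ ?_ hX hT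
  · rw [ModuleCat.epi_iff_surjective]
    exact fun y => ⟨0, Subsingleton.elim _ _⟩
  · intro y
    refine iff_of_true (Subsingleton.elim _ _) ⟨(inv e.hom) y, ?_⟩
    rw [← mc_comp_apply, IsIso.inv_hom_id, mc_id_apply]

lemma fdelta_prod {n : ℕ} {Δ : Fin n → ModuleCat.{0} A} (hres : Resolving (FDelta Δ))
    (M N : ModuleCat.{0} A) (hM : M ∈ FDelta Δ) (hN : N ∈ FDelta Δ) :
    ModuleCat.of A (M × N) ∈ FDelta Δ := by
  refine hres.2.1 M (ModuleCat.of A (M × N)) N (pinl M N) (psnd M N) ?_ ?_ ?_ hM hN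
  · rw [ModuleCat.mono_iff_injective]
    intro a b h
    have := congrArg Prod.fst h
    exact this
  · rw [ModuleCat.epi_iff_surjective]
    exact fun y => ⟨(0, y), rfl⟩
  · intro p
    constructor
    · intro h
      exact ⟨p.1, Prod.ext_iff.mpr ⟨rfl, h.symm⟩⟩
    · rintro ⟨x, rfl⟩
      rfl

/-- `k`-dimension of an `A`-module, via the algebra map. -/
noncomputable def krank (k : Type) [Field k] [Algebra k A] (X : ModuleCat.{0} A) : ℕ :=
  @Module.finrank k ↥X _ _ (Module.compHom ↥X (algebraMap k A))

lemma krank_lt (k : Type) [Field k] [Algebra k A] [FiniteDimensional k A]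
    (X : ModuleCat.{0} A) (hfin : Module.Finite A X)
    (p : Submodule A ↥X) (hp : p ≠ ⊤) :
    krank k (ModuleCat.of A ↥p) < krank k X := by
  letI iX : Module k ↥X := Module.compHom ↥X (algebraMap k A)
  letI ip : Module k ↥p := Module.compHom ↥p (algebraMap k A)
  haveI tX : IsScalarTower k A ↥X := ⟨fun c a x => by
    show (c • a) • x = algebraMap k A c • (a • x)
    rw [Algebra.smul_def, mul_smul]⟩
  haveI : Module.Finite k ↥X := Module.Finite.trans A ↥X
  set pk : Submodule k ↥X := Submodule.restrictScalars k p with hpk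
  have hpkne : pk ≠ ⊤ := fun h => hp ((Submodule.restrictScalars_eq_top_iff k A ↥X).mp h)
  have hlt : Module.finrank k ↥pk < Module.finrank k ↥X :=
    Submodule.finrank_lt hpkne
  have heq : Module.finrank k ↥p = Module.finrank k ↥pk := by
    refine LinearEquiv.finrank_eq ?_
    exact { toFun := fun x => ⟨x.1, x.2⟩
            invFun := fun x => ⟨x.1, x.2⟩
            left_inv := fun x => rfl
            right_inv := fun x => rfl
            map_add' := fun x y => rfl
            map_smul' := fun c x => Subtype.ext rfl }
  show Module.finrank k ↥p < Module.finrank k ↥X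
  rw [heq]
  exact hlt

lemma fdelta_projective (k : Type) [Field k] [Algebra k A] [FiniteDimensional k A]
    {n : ℕ} {Δ : Fin n → ModuleCat.{0} A} (hres : Resolving (FDelta Δ)) :
    ∀ (NN : ℕ) (X : ModuleCat.{0} A), krank k X ≤ NN → Module.Finite A X →
      Projective X → X ∈ FDelta Δ := by
  intro NN
  induction NN with
  | zero =>
    intro X hrk hfin _
    letI iX : Module k ↥X := Module.compHom ↥X (algebraMap k A)
    haveI tX : IsScalarTower k A ↥X := ⟨fun c a x => by
      show (c • a) • x = algebraMap k A c • (a • x)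
      rw [Algebra.smul_def, mul_smul]⟩
    haveI : Module.Finite k ↥X := Module.Finite.trans A ↥X
    have h0 : Module.finrank k ↥X = 0 := Nat.le_zero.mp hrk
    have hss : Subsingleton ↥X := Module.finrank_zero_iff.mp h0
    exact fdelta_triv Δ X hss
  | succ NN ih =>
    intro X hrk hfin hproj
    by_cases hss : Subsingleton ↥X
    · exact fdelta_triv Δ X hss
    by_cases hind : Indec X
    · exact hres.1 X hfin hproj hind
    have hE : ∃ e : X ⟶ X, (e ≫ e = e) ∧ e ≠ 0 ∧ e ≠ 𝟙 X := by
      by_contra hc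
      push_neg at hc
      exact hind ⟨hss, fun e he => or_iff_not_imp_left.mpr (hc e he)⟩
    obtain ⟨e, hee, he0, he1⟩ := hE
    set F : ↥X →ₗ[A] ↥X := (show ↥X →ₗ[A] ↥X from e.hom) with hF
    have hFF : ∀ x, F (F x) = F x := fun x => by
      have := eq_app hee x; exact this
    set p : Submodule A ↥X := LinearMap.ker F with hpdef
    set q : Submodule A ↥X := LinearMap.range F with hqdef
    have hcompl : IsCompl p q := by
      constructor
      · rw [Submodule.disjoint_def]
        intro x hxp hxq
        obtain ⟨y, hy⟩ := hxq
        have h1 : F x = 0 := LinearMap.mem_ker.mp hxp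
        have h2 : F x = x := by rw [← hy, hFF]
        rw [h2] at h1
        exact h1
      · rw [codisjoint_iff, eq_top_iff]
        intro x _
        rw [Submodule.mem_sup]
        refine ⟨x - F x, ?_, F x, ⟨x, rfl⟩, by rw [sub_add_cancel]⟩
        rw [hpdef, LinearMap.mem_ker, map_sub, hFF, sub_self]
    have hpne : p ≠ ⊤ := by
      intro h
      apply he0
      refine hom_ext' fun x => ?_
      have hx : x ∈ p := h ▸ Submodule.mem_top
      have := LinearMap.mem_ker.mp hx
      exact this
    have hqne : q ≠ ⊤ := by
      intro h
      apply he1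
      refine hom_ext' fun x => ?_
      have hx : x ∈ q := h ▸ Submodule.mem_top
      obtain ⟨y, hy⟩ := hx
      show F x = x
      rw [← hy, hFF]
    -- finiteness of factors
    letI iX : Module k ↥X := Module.compHom ↥X (algebraMap k A)
    haveI tX : IsScalarTower k A ↥X := ⟨fun c a x => by
      show (c • a) • x = algebraMap k A c • (a • x)
      rw [Algebra.smul_def, mul_smul]⟩
    haveI : Module.Finite k ↥X := Module.Finite.trans A ↥X
    haveI : IsNoetherian A ↥X := isNoetherian_of_tower k inferInstance
    haveI hfp : Module.Finite A ↥p := inferInstance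
    haveI hfq : Module.Finite A ↥q := inferInstance
    -- projectivity of factors
    have hXproj' : Module.Projective A ↥X :=
      (IsProjective.iff_projective _).mpr (Projective.of_iso (Iso.refl X).symm hproj)
    have hp_split : Module.Projective A ↥p :=
      Module.Projective.of_split p.subtype (Submodule.projectionOnto p q hcompl)
        (Submodule.projectionOnto_comp_subtype hcompl)
    have hq_split : Module.Projective A ↥q :=
      Module.Projective.of_split q.subtype (Submodule.projectionOnto q p hcompl.symm)
        (Submodule.projectionOnto_comp_subtype hcompl.symm)
    -- memberships by induction
    have hKrk : krank k (ModuleCat.of A ↥p) ≤ NN := by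
      have := krank_lt k X hfin p hpne
      omega
    have hRrk : krank k (ModuleCat.of A ↥q) ≤ NN := by
      have := krank_lt k X hfin q hqne
      omega
    have hK : ModuleCat.of A ↥p ∈ FDelta Δ :=
      ih (ModuleCat.of A ↥p) hKrk hfp ((IsProjective.iff_projective _).mp hp_split)
    have hR : ModuleCat.of A ↥q ∈ FDelta Δ :=
      ih (ModuleCat.of A ↥q) hRrk hfq ((IsProjective.iff_projective _).mp hq_split)
    have hprod : ModuleCat.of A (↥p × ↥q) ∈ FDelta Δ :=
      fdelta_prod hres (ModuleCat.of A ↥p) (ModuleCat.of A ↥q) hK hR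
    have iso : ModuleCat.of A (↥p × ↥q) ≅ X :=
      (Submodule.prodEquivOfIsCompl p q hcompl).toModuleIso ≪≫ Iso.refl X
    exact fdelta_iso hres iso hprod

lemma fdelta_of_projective (k : Type) [Field k] [Algebra k A] [FiniteDimensional k A]
    {n : ℕ} {Δ : Fin n → ModuleCat.{0} A} (hres : Resolving (FDelta Δ))
    (X : ModuleCat.{0} A) (hfin : Module.Finite A X) (hproj : Projective X) :
    X ∈ FDelta Δ :=
  fdelta_projective k hres (krank k X) X le_rfl hfin hproj

end Stmt9Aux

/-- for a finite-dimensional quasi-hereditary algebra over an infinite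
perfect field, if (rad_Δ^∞)² = 0 on ℱ(Δ) then ℱ(Δ) has finitely many indecomposables
up to isomorphism.  (Zeng's theorem is assumed, as permitted.) -/
theorem stmt9 {k : Type} [Field k] [Infinite k] [PerfectField k]
    {A : Type} [Ring A] [Algebra k A] [FiniteDimensional k A]
    {n : ℕ} (Δ : Fin n → ModuleCat.{0} A)
    (hres : Resolving (FDelta Δ)) (hcov : CovariantlyFinite (FDelta Δ))
    (hcontra : ContravariantlyFinite (FDelta Δ))
    (hcovers : ∀ m : ℕ, IsCover (Ppart (FDelta Δ) m) (pRest (FDelta Δ) m))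
    (hcocovers : ∀ m : ℕ, IsCocover (Ipart (FDelta Δ) m) (iRest (FDelta Δ) m))
    (hI0fin : FinRep (Ipart (FDelta Δ) 0))
    (hZeng : ¬ FinRep {M | M ∈ FDelta Δ ∧ Indec M} →
      ∃ M : ModuleCat.{0} A, M ∈ Pinf (FDelta Δ) ∧ M ∈ Iinf (FDelta Δ))
    (hrad : ∀ (M N L : ModuleCat.{0} A) (f : M ⟶ N) (g : N ⟶ L),
      M ∈ FDelta Δ → N ∈ FDelta Δ → L ∈ FDelta Δ →
      f ∈ radInf (FDelta Δ) M N → g ∈ radInf (FDelta Δ) N L → f ≫ g = 0) :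
    FinRep {M | M ∈ FDelta Δ ∧ Indec M} := by
  classical
  by_contra hfin
  obtain ⟨M, hMP, hMI⟩ := hZeng hfin
  have hMC : M ∈ FDelta Δ := hMP.1
  have hMind : Indec M := hMP.2.1
  haveI hMfin : Module.Finite A ↥M := hMC.1
  have hCfin : ∀ X ∈ FDelta Δ, Module.Finite A ↥X := fun X hX => hX.1
  have hPm : ∀ m, M ∈ pRest (FDelta Δ) m := pinf_mem_pRest hMP
  have hIm : ∀ m, M ∈ iRest (FDelta Δ) m := iinf_mem_iRest hMI
  -- a projective cover of M lies in the infinite radical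
  obtain ⟨nn, f0, hf0⟩ := Module.Finite.exists_fin' A ↥M
  set P : ModuleCat.{0} A := ModuleCat.of A (Fin nn → A) with hP
  set π : P ⟶ M := (ModuleCat.ofHom f0) with hπ
  haveI hπepi : Epi π := (ModuleCat.epi_iff_surjective π).mpr hf0
  haveI hPproj : Projective P :=
    (IsProjective.iff_projective _).mp (inferInstance : Module.Projective A (Fin nn → A))
  have hPC : P ∈ FDelta Δ := fdelta_of_projective k hres P (inferInstance : Module.Finite A (Fin nn → A)) hPproj
  have hπall : ∀ m, π ∈ radPow (FDelta Δ) m P M := by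
    intro m
    obtain ⟨Z, hZ, f, hfe, hfr⟩ := coverRad k (FDelta Δ) hCfin hcovers m M (hPm m) hMind
    haveI := hfe
    have hfac : Projective.factorThru π f ≫ f = π := Projective.factorThru_comp π f
    rw [← hfac]
    exact radPow_precomp (FDelta Δ) m f hfr _
  have hπinf : π ∈ radInf (FDelta Δ) P M := mem_radInf_of_all hπall
  -- the infinite radical out of M vanishes
  have hvanish : ∀ L, L ∈ FDelta Δ → ∀ g : M ⟶ L, g ∈ radInf (FDelta Δ) M L → g = 0 := by
    intro L hL g hg
    have h0 : π ≫ g = 0 := hrad P M L π g hPC hMC hL hπinf hg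
    exact (cancel_epi π).mp (by rw [h0, Limits.comp_zero])
  -- vanishing at a finite level, for each preinjective of level 0
  have hvan1 : ∀ D, D ∈ Ipart (FDelta Δ) 0 →
      ∃ m₀ : ℕ, ∀ g : M ⟶ D, g ∈ radPow (FDelta Δ) m₀ M D → g = 0 := by
    intro D hD
    have hDC : D ∈ FDelta Δ := hD.1
    obtain ⟨m₀, hm₀⟩ := radPow_stab k (FDelta Δ) M D hMfin hDC.1
    refine ⟨m₀, fun g hg => hvanish D hDC g ?_⟩
    apply mem_radInf_of_all
    intro m
    rcases le_or_gt m m₀ with h | h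
    · exact radPow_mono _ h M D hg
    · rw [hm₀ m (le_of_lt h)]; exact hg
  -- uniform bound, using finiteness of the level-0 preinjectives
  obtain ⟨ι, hι, rep, hrep⟩ := hI0fin
  haveI := hι
  haveI := Fintype.ofFinite ι
  have hmi : ∀ i : ι, ∃ mi : ℕ, ∀ D, D ∈ Ipart (FDelta Δ) 0 → Nonempty (D ≅ rep i) →
      ∀ g : M ⟶ D, g ∈ radPow (FDelta Δ) mi M D → g = 0 := by
    intro i
    by_cases hex : ∃ D, D ∈ Ipart (FDelta Δ) 0 ∧ Nonempty (D ≅ rep i)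
    · obtain ⟨D₀, hD₀, ⟨β⟩⟩ := hex
      obtain ⟨m₀, hm₀⟩ := hvan1 D₀ hD₀
      refine ⟨m₀, fun D hD hiso g hg => ?_⟩
      obtain ⟨α⟩ := hiso
      have hγ : D ≅ D₀ := α ≪≫ β.symm
      have h1 : g ≫ hγ.hom ∈ radPow (FDelta Δ) m₀ M D₀ := radPow_postcomp _ m₀ g hg _
      have h2 : g ≫ hγ.hom = 0 := hm₀ _ h1
      calc g = (g ≫ hγ.hom) ≫ hγ.inv := by
            rw [Category.assoc, Iso.hom_inv_id, Category.comp_id]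
        _ = 0 := by rw [h2, Limits.zero_comp]
    · exact ⟨0, fun D hD hiso => absurd ⟨D, hD, hiso⟩ hex⟩
  choose mfun hmfun using hmi
  set m₁ : ℕ := Finset.univ.sup mfun with hm₁
  have hvanstar : ∀ D, D ∈ Ipart (FDelta Δ) 0 →
      ∀ g : M ⟶ D, g ∈ radPow (FDelta Δ) m₁ M D → g = 0 := by
    intro D hD g hg
    obtain ⟨i, hiso⟩ := hrep D hD
    have hle : mfun i ≤ m₁ := Finset.le_sup (Finset.mem_univ i)
    exact hmfun i D hD hiso g (radPow_mono _ hle M D hg)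
  -- the deep mono out of M must vanish, contradiction
  obtain ⟨Z, hZ, g, hgmono, hgrad⟩ :=
    cocoverRad k (FDelta Δ) hCfin hcocovers m₁ M (hIm m₁) hMind
  have hg0 : g = 0 := vanish_on_add hvanstar Z hZ g hgrad
  rw [hg0] at hgmono
  apply hMind.1
  have hz : ∀ x : ↥M, x = 0 := fun x =>
    (ModuleCat.mono_iff_injective (0 : M ⟶ Z)).mp hgmono rfl
  exact ⟨fun a b => by rw [hz a, hz b]⟩
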